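/- The Cayley hyperdeterminant is invariant under the action of SL(2) on the first axis: if ((a',b'),(c',d')) = p·((a,b),(c,d)) + q·((e,f),(g,h)) and ((e',f'),(g',h')) = r·((a,b),(c,d)) + s·((e,f),(g,h)) with ps - qr = 1, then Det(a',b',c',d',e',f',g',h') = Det(a,b,c,d,e,f,g,h). -/
import Mathlib


/-- Cayley's hyperdeterminant is invariant under the SL(2) action on the first axis. -/
theorem cayley_hyperdet_sl2_first_axis {R : Type*} [CommRing R]
    (a b c d e f g h p q r s : R) (hdet : p * s - q * r = 1) :
    ((p * a + q * e) * (r * d + s * h) + (p * d + q * h) * (r * a + s * e)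
      - (p * c + q * g) * (r * b + s * f) - (p * b + q * f) * (r * c + s * g)) ^ 2
      - 4 * ((p * a + q * e) * (p * d + q * h) - (p * b + q * f) * (p * c + q * g))
          * ((r * a + s * e) * (r * d + s * h) - (r * b + s * f) * (r * c + s * g)) =
    (a * h + d * e - c * f - b * g) ^ 2 - 4 * (a * d - b * c) * (e * h - f * g) := by
  linear_combination ((p * s - q * r + 1) * ((a * h + d * e - c * f - b * g) ^ 2 - 4 * (a * d - b * c) * (e * h - f * g))) * hdet
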